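/- With notation as in the QuickSort decomposition lemma, let Q_s denote the random output ranking of QuickSort and for X: V×V → ℝ define α[Q_s,X]_{uv} = Q_s(u,v)X(v,u) + Q_s(v,u)X(u,v), α[h,X]_{uv} = h(u,v)X(v,u) + h(v,u)X(u,v), and β[X]_{uvw} = (1/3)[h(u,v)h(v,w)X(w,u) + h(w,v)h(v,u)X(u,w) + h(v,u)h(u,w)X(w,v) + h(w,u)h(u,v)X(v,w) + h(u,w)h(w,v)X(v,u) + h(v,w)h(w,u)X(u,v)]. Then E_s[Σ_{u<v} α[Q_s,X]_{uv}] = Σ_{u<v} p_{uv}·α[h,X]_{uv} + Σ_{u<v<w} p_{uvw}·β[X]_{uvw}. -/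

import Mathlib

variable {V : Type*} [DecidableEq V]

/-- QuickSort on a list using a (possibly non-transitive) preference function:
the head is the pivot, elements preferred to the pivot go left.  Running it on
a uniformly random permutation of the input is equivalent to uniformly random
pivot selection. -/
def qsort (h : V → V → Bool) : List V → List V
  | [] => []
  | x :: xs =>
      qsort h (xs.filter (fun y => h y x)) ++ x :: qsort h (xs.filter (fun y => !(h y x)))
  termination_by l => l.length
  decreasing_by
    · simp only [List.length_cons, List.length_unattach]; exact Nat.lt_succ_of_le ((List.length_filter_le _ _).trans (le_of_eq List.length_attach))
    · simp only [List.length_cons, List.length_unattach]; exact Nat.lt_succ_of_le ((List.length_filter_le _ _).trans (le_of_eq List.length_attach))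

/-- The unordered pairs compared directly (pivot vs. element of its call). -/
def directPairs (h : V → V → Bool) : List V → List (Finset V)
  | [] => []
  | x :: xs =>
      xs.map (fun y => ({x, y} : Finset V)) ++
      (directPairs h (xs.filter (fun y => h y x)) ++
        directPairs h (xs.filter (fun y => !(h y x))))
  termination_by l => l.length
  decreasing_by
    · simp only [List.length_cons, List.length_unattach]; exact Nat.lt_succ_of_le ((List.length_filter_le _ _).trans (le_of_eq List.length_attach))
    · simp only [List.length_cons, List.length_unattach]; exact Nat.lt_succ_of_le ((List.length_filter_le _ _).trans (le_of_eq List.length_attach))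

/-- The unordered triples present together in a recursive call whose pivot is
one of them. -/
def pivotTriples (h : V → V → Bool) : List V → List (Finset V)
  | [] => []
  | x :: xs =>
      (xs.product xs).map (fun p => ({x, p.1, p.2} : Finset V)) ++
      (pivotTriples h (xs.filter (fun y => h y x)) ++
        pivotTriples h (xs.filter (fun y => !(h y x))))
  termination_by l => l.length
  decreasing_by
    · simp only [List.length_cons, List.length_unattach]; exact Nat.lt_succ_of_le ((List.length_filter_le _ _).trans (le_of_eq List.length_attach))
    · simp only [List.length_cons, List.length_unattach]; exact Nat.lt_succ_of_le ((List.length_filter_le _ _).trans (le_of_eq List.length_attach))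

/-- Expectation of `f` of the input list over a uniformly random ordering of
`V` (equivalently, over the random bits of QuickSort's pivot choices). -/
noncomputable def qsExp [Fintype V] (f : List V → ℝ) : ℝ :=
  (((Finset.univ : Finset V).toList.permutations.map f).sum) /
    (Nat.factorial (Fintype.card V))

/-- p_{uv}: the probability that the pair {u,v} is compared directly. -/
noncomputable def pPair [Fintype V] (h : V → V → Bool) (u v : V) : ℝ :=
  qsExp (fun l => if ({u, v} : Finset V) ∈ directPairs h l then 1 else 0)

/-- p_{uvw}: the probability that u, v, w are in the same recursive call when
one of them is first chosen as pivot. -/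
noncomputable def pTriple [Fintype V] (h : V → V → Bool) (u v w : V) : ℝ :=
  qsExp (fun l => if ({u, v, w} : Finset V) ∈ pivotTriples h l then 1 else 0)

/-- The {0,1}-valued preference function as a real number. -/
def hr (h : V → V → Bool) (a b : V) : ℝ := if h a b then 1 else 0

/-- Indicator that `u` is ranked before `v` in the output list. -/
def rankBefore (l : List V) (u v : V) : ℝ := if l.idxOf u < l.idxOf v then 1 else 0

set_option linter.unusedSectionVars false

theorem qsortRec (h : V → V → Bool) (motive : List V → Prop)
    (base : motive [])
    (step : ∀ x xs, motive (xs.filter (fun y => h y x)) →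
      motive (xs.filter (fun y => !(h y x))) → motive (x :: xs)) :
    ∀ l, motive l := by
  have key : ∀ n (l : List V), l.length ≤ n → motive l := by
    intro n
    induction n with
    | zero =>
      intro l hl
      rw [Nat.le_zero, List.length_eq_zero_iff] at hl
      simpa [hl] using base
    | succ n ih =>
      intro l hl
      match l with
      | [] => exact base
      | x :: xs =>
        have hxs : xs.length ≤ n := Nat.succ_le_succ_iff.mp hl
        exact step x xs (ih _ (le_trans (List.length_filter_le _ _) hxs))
          (ih _ (le_trans (List.length_filter_le _ _) hxs))
  exact fun l => key l.length l le_rfl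

def pt (h : V → V → Bool) (w u v : V) : List V → Bool
  | [] => false
  | x :: xs =>
      (decide (x = w) && decide (u ∈ xs) && decide (v ∈ xs))
      || pt h w u v (xs.filter (fun y => h y x))
      || pt h w u v (xs.filter (fun y => !(h y x)))
  termination_by l => l.length
  decreasing_by
    · simp only [List.length_cons, List.length_unattach]; exact Nat.lt_succ_of_le ((List.length_filter_le _ _).trans (le_of_eq List.length_attach))
    · simp only [List.length_cons, List.length_unattach]; exact Nat.lt_succ_of_le ((List.length_filter_le _ _).trans (le_of_eq List.length_attach))

theorem pt_cons (h : V → V → Bool) (w u v x : V) (xs : List V) :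
    pt h w u v (x :: xs) = true ↔
      (x = w ∧ u ∈ xs ∧ v ∈ xs) ∨ pt h w u v (xs.filter (fun y => h y x)) = true ∨
        pt h w u v (xs.filter (fun y => !(h y x))) = true := by
  rw [pt]
  simp [and_assoc, or_assoc]

theorem qsort_cons (h : V → V → Bool) (x : V) (xs : List V) :
    qsort h (x :: xs) =
      qsort h (xs.filter (fun y => h y x)) ++ x :: qsort h (xs.filter (fun y => !(h y x))) := by
  rw [qsort]

theorem qsort_perm (h : V → V → Bool) : ∀ l : List V, (qsort h l).Perm l := by
  refine qsortRec h _ (by rw [qsort]) ?_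
  intro x xs ih1 ih2
  rw [qsort_cons]
  exact ((ih1.append (ih2.cons x)).trans List.perm_middle).trans
    ((List.filter_append_perm _ xs).cons x)

theorem mem_qsort (h : V → V → Bool) {a : V} {l : List V} : a ∈ qsort h l ↔ a ∈ l :=
  (qsort_perm h l).mem_iff

theorem nodup_qsort (h : V → V → Bool) {l : List V} (hl : l.Nodup) : (qsort h l).Nodup :=
  (qsort_perm h l).nodup_iff.mpr hl

theorem pt_mem (h : V → V → Bool) (w u v : V) :
    ∀ l : List V, pt h w u v l = true → w ∈ l ∧ u ∈ l ∧ v ∈ l := by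
  refine qsortRec h _ (by simp [pt]) ?_
  intro x xs ih1 ih2 hp
  rw [pt_cons] at hp
  rcases hp with ⟨rfl, hu, hv⟩ | hp | hp
  · exact ⟨List.mem_cons_self, List.mem_cons_of_mem _ hu, List.mem_cons_of_mem _ hv⟩
  · obtain ⟨h1, h2, h3⟩ := ih1 hp
    exact ⟨List.mem_cons_of_mem _ (List.mem_of_mem_filter h1),
      List.mem_cons_of_mem _ (List.mem_of_mem_filter h2),
      List.mem_cons_of_mem _ (List.mem_of_mem_filter h3)⟩
  · obtain ⟨h1, h2, h3⟩ := ih2 hp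
    exact ⟨List.mem_cons_of_mem _ (List.mem_of_mem_filter h1),
      List.mem_cons_of_mem _ (List.mem_of_mem_filter h2),
      List.mem_cons_of_mem _ (List.mem_of_mem_filter h3)⟩

theorem pt_symm (h : V → V → Bool) (w u v : V) :
    ∀ l : List V, pt h w u v l = pt h w v u l := by
  refine qsortRec h _ (by rw [pt, pt]) ?_
  intro x xs ih1 ih2
  rw [Bool.eq_iff_iff, pt_cons, pt_cons, ih1, ih2]
  tauto

theorem pt_excl (h : V → V → Bool) :
    ∀ l : List V, l.Nodup → ∀ p q y y', p ≠ q →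
      pt h p q y l = true → pt h q p y' l = true → False := by
  refine qsortRec h _ (by simp [pt]) ?_
  intro x xs ih1 ih2 hnd p q y y' hpq h1 h2
  have hxxs : x ∉ xs := (List.nodup_cons.mp hnd).1
  have hxs : xs.Nodup := (List.nodup_cons.mp hnd).2
  rw [pt_cons] at h1 h2
  rcases h1 with ⟨rfl, hq, _⟩ | h1 | h1
  · rcases h2 with ⟨rfl, _, _⟩ | h2 | h2
    · exact hpq rfl
    · exact hxxs (List.mem_of_mem_filter (pt_mem h q x y' _ h2).2.1)
    · exact hxxs (List.mem_of_mem_filter (pt_mem h q x y' _ h2).2.1)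
  · have hpL := (pt_mem h p q y _ h1).1
    have hqL := (pt_mem h p q y _ h1).2.1
    rcases h2 with ⟨rfl, _, _⟩ | h2 | h2
    · exact hxxs (List.mem_of_mem_filter hqL)
    · exact ih1 (hxs.filter _) p q y y' hpq h1 h2
    · have hqR := (pt_mem h q p y' _ h2).1
      have := (List.mem_filter.mp hqL).2
      have := (List.mem_filter.mp hqR).2
      simp_all
  · have hpR := (pt_mem h p q y _ h1).1
    have hqR := (pt_mem h p q y _ h1).2.1
    rcases h2 with ⟨rfl, _, _⟩ | h2 | h2
    · exact hxxs (List.mem_of_mem_filter hqR)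
    · have hqL := (pt_mem h q p y' _ h2).1
      have := (List.mem_filter.mp hqR).2
      have := (List.mem_filter.mp hqL).2
      simp_all
    · exact ih2 (hxs.filter _) p q y y' hpq h1 h2

theorem mem_map_swap {a b z : V} {xs : List V} :
    z ∈ xs.map (Equiv.swap a b) ↔ Equiv.swap a b z ∈ xs := by
  rw [List.mem_map]
  constructor
  · rintro ⟨y, hy, rfl⟩; rwa [Equiv.swap_apply_self]
  · intro hz; exact ⟨_, hz, Equiv.swap_apply_self _ _ _⟩

theorem filter_map_swap {a b : V} (p : V → Bool) (hpab : p a = p b) (xs : List V) :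
    (xs.map (Equiv.swap a b)).filter p = (xs.filter p).map (Equiv.swap a b) := by
  rw [List.filter_map]
  congr 1
  apply List.filter_congr
  intro y _
  simp only [Function.comp_apply]
  rcases eq_or_ne y a with hya | hya
  · rw [hya, Equiv.swap_apply_left, ← hpab]
  · rcases eq_or_ne y b with hyb | hyb
    · rw [hyb, Equiv.swap_apply_right, hpab]
    · rw [Equiv.swap_apply_of_ne_of_ne hya hyb]

theorem pt_map_swap (h : V → V → Bool) {a b c : V} (hab : a ≠ b) (hac : a ≠ c) (hbc : b ≠ c) :
    ∀ l : List V, l.Nodup →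
      (pt h a b c l = true ↔ pt h b a c (l.map (Equiv.swap a b)) = true) := by
  refine qsortRec h _ (by simp [pt]) ?_
  intro x xs ih1 ih2 hnd
  have hxxs : x ∉ xs := (List.nodup_cons.mp hnd).1
  have hxs : xs.Nodup := (List.nodup_cons.mp hnd).2
  rw [List.map_cons]
  rcases eq_or_ne x a with rfl | hxa
  · -- pivot position holds a; mapped list has b there
    rw [Equiv.swap_apply_left]
    rw [pt_cons, pt_cons]
    constructor
    · rintro (⟨-, hb, hc⟩ | hp | hp)
      · exact Or.inl ⟨rfl, mem_map_swap.mpr (by rwa [Equiv.swap_apply_left]),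
          mem_map_swap.mpr (by rwa [Equiv.swap_apply_of_ne_of_ne (Ne.symm hac) (Ne.symm hbc)])⟩
      · exact absurd (List.mem_of_mem_filter (pt_mem h _ _ _ _ hp).1) hxxs
      · exact absurd (List.mem_of_mem_filter (pt_mem h _ _ _ _ hp).1) hxxs
    · rintro (⟨-, ha, hc⟩ | hp | hp)
      · refine Or.inl ⟨rfl, ?_, ?_⟩
        · have := mem_map_swap.mp ha; rwa [Equiv.swap_apply_left] at this
        · have := mem_map_swap.mp hc
          rwa [Equiv.swap_apply_of_ne_of_ne (Ne.symm hac) (Ne.symm hbc)] at this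
      · have := mem_map_swap.mp (List.mem_of_mem_filter (pt_mem h _ _ _ _ hp).1)
        rw [Equiv.swap_apply_right] at this
        exact absurd this hxxs
      · have := mem_map_swap.mp (List.mem_of_mem_filter (pt_mem h _ _ _ _ hp).1)
        rw [Equiv.swap_apply_right] at this
        exact absurd this hxxs
  · rcases eq_or_ne x b with rfl | hxb
    · -- pivot position holds b; mapped list has a there
      rw [Equiv.swap_apply_right]
      rw [pt_cons, pt_cons]
      constructor
      · rintro (⟨h1, -, -⟩ | hp | hp)
        · exact absurd h1.symm hab
        · exact absurd (List.mem_of_mem_filter (pt_mem h _ _ _ _ hp).2.1) hxxs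
        · exact absurd (List.mem_of_mem_filter (pt_mem h _ _ _ _ hp).2.1) hxxs
      · rintro (⟨h1, -, -⟩ | hp | hp)
        · exact absurd h1 hab
        · have := mem_map_swap.mp (List.mem_of_mem_filter (pt_mem h _ _ _ _ hp).2.1)
          rw [Equiv.swap_apply_left] at this
          exact absurd this hxxs
        · have := mem_map_swap.mp (List.mem_of_mem_filter (pt_mem h _ _ _ _ hp).2.1)
          rw [Equiv.swap_apply_left] at this
          exact absurd this hxxs
    · rcases eq_or_ne x c with rfl | hxc
      · rw [Equiv.swap_apply_of_ne_of_ne hxa hxb]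
        rw [pt_cons, pt_cons]
        constructor
        · rintro (⟨h1, -, -⟩ | hp | hp)
          · exact absurd h1 hac.symm
          · exact absurd (List.mem_of_mem_filter (pt_mem h _ _ _ _ hp).2.2) hxxs
          · exact absurd (List.mem_of_mem_filter (pt_mem h _ _ _ _ hp).2.2) hxxs
        · rintro (⟨h1, -, -⟩ | hp | hp)
          · exact absurd h1 hbc.symm
          · have := mem_map_swap.mp (List.mem_of_mem_filter (pt_mem h _ _ _ _ hp).2.2)
            rw [Equiv.swap_apply_of_ne_of_ne hac.symm hbc.symm] at this
            exact absurd this hxxs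
          · have := mem_map_swap.mp (List.mem_of_mem_filter (pt_mem h _ _ _ _ hp).2.2)
            rw [Equiv.swap_apply_of_ne_of_ne hac.symm hbc.symm] at this
            exact absurd this hxxs
      · -- pivot not among a, b, c
        rw [Equiv.swap_apply_of_ne_of_ne hxa hxb]
        by_cases hsame : h a x = h b x
        · have e1 : (xs.map (Equiv.swap a b)).filter (fun y => h y x)
              = (xs.filter (fun y => h y x)).map (Equiv.swap a b) :=
            filter_map_swap (fun y => h y x) hsame xs
          have e2 : (xs.map (Equiv.swap a b)).filter (fun y => !(h y x))
              = (xs.filter (fun y => !(h y x))).map (Equiv.swap a b) :=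
            filter_map_swap (fun y => !(h y x)) (by simp [hsame]) xs
          rw [pt_cons, pt_cons, e1, e2]
          rw [← ih1 (hxs.filter _), ← ih2 (hxs.filter _)]
          constructor
          · rintro (⟨h1, -, -⟩ | hp | hp)
            · exact absurd h1 hxa
            · exact Or.inr (Or.inl hp)
            · exact Or.inr (Or.inr hp)
          · rintro (⟨h1, -, -⟩ | hp | hp)
            · exact absurd h1 hxb
            · exact Or.inr (Or.inl hp)
            · exact Or.inr (Or.inr hp)
        · -- a and b get separated: both sides false
          constructor
          · intro hp
            rw [pt_cons] at hp
            rcases hp with ⟨h1, -, -⟩ | hp | hp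
            · exact absurd h1 hxa
            · have ha := (List.mem_filter.mp (pt_mem h _ _ _ _ hp).1).2
              have hb := (List.mem_filter.mp (pt_mem h _ _ _ _ hp).2.1).2
              exact absurd (ha.trans hb.symm) hsame
            · have ha := (List.mem_filter.mp (pt_mem h _ _ _ _ hp).1).2
              have hb := (List.mem_filter.mp (pt_mem h _ _ _ _ hp).2.1).2
              simp only [Bool.not_eq_true'] at ha hb
              exact absurd (ha.trans hb.symm) hsame
          · intro hp
            rw [pt_cons] at hp
            rcases hp with ⟨h1, -, -⟩ | hp | hp
            · exact absurd h1 hxb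
            · have ha := (List.mem_filter.mp (pt_mem h _ _ _ _ hp).2.1).2
              have hb := (List.mem_filter.mp (pt_mem h _ _ _ _ hp).1).2
              exact absurd (ha.trans hb.symm) hsame
            · have ha := (List.mem_filter.mp (pt_mem h _ _ _ _ hp).2.1).2
              have hb := (List.mem_filter.mp (pt_mem h _ _ _ _ hp).1).2
              simp only [Bool.not_eq_true'] at ha hb
              exact absurd (ha.trans hb.symm) hsame

theorem directPairs_cons (h : V → V → Bool) (x : V) (xs : List V) (s : Finset V) :
    s ∈ directPairs h (x :: xs) ↔
      (∃ y ∈ xs, ({x, y} : Finset V) = s) ∨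
        s ∈ directPairs h (xs.filter (fun y => h y x)) ∨
        s ∈ directPairs h (xs.filter (fun y => !(h y x))) := by
  rw [directPairs]
  simp [List.mem_append, List.mem_map]

theorem pivotTriples_cons (h : V → V → Bool) (x : V) (xs : List V) (s : Finset V) :
    s ∈ pivotTriples h (x :: xs) ↔
      (∃ p, p ∈ xs.product xs ∧ ({x, p.1, p.2} : Finset V) = s) ∨
        s ∈ pivotTriples h (xs.filter (fun y => h y x)) ∨
        s ∈ pivotTriples h (xs.filter (fun y => !(h y x))) := by
  rw [pivotTriples]
  simp [List.mem_append, List.mem_map]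

theorem directPairs_mem (h : V → V → Bool) {u v : V} :
    ∀ l : List V, ({u, v} : Finset V) ∈ directPairs h l → u ∈ l ∧ v ∈ l := by
  refine qsortRec h _ (by rw [directPairs]; simp) ?_
  intro x xs ih1 ih2 hm
  rw [directPairs_cons] at hm
  rcases hm with ⟨y, hy, heq⟩ | hm | hm
  · have hu : u ∈ ({x, y} : Finset V) := by rw [heq]; simp
    have hv : v ∈ ({x, y} : Finset V) := by rw [heq]; simp
    simp only [Finset.mem_insert, Finset.mem_singleton] at hu hv
    constructor
    · rcases hu with rfl | rfl
      · exact List.mem_cons_self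
      · exact List.mem_cons_of_mem _ hy
    · rcases hv with rfl | rfl
      · exact List.mem_cons_self
      · exact List.mem_cons_of_mem _ hy
  · obtain ⟨h1, h2⟩ := ih1 hm
    exact ⟨List.mem_cons_of_mem _ (List.mem_of_mem_filter h1),
      List.mem_cons_of_mem _ (List.mem_of_mem_filter h2)⟩
  · obtain ⟨h1, h2⟩ := ih2 hm
    exact ⟨List.mem_cons_of_mem _ (List.mem_of_mem_filter h1),
      List.mem_cons_of_mem _ (List.mem_of_mem_filter h2)⟩

theorem triple_root_iff {u v w x : V} (huv : u ≠ v) (huw : u ≠ w) (hvw : v ≠ w)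
    (xs : List V) :
    (∃ p : V × V, p ∈ xs.product xs ∧ ({x, p.1, p.2} : Finset V) = {u, v, w}) ↔
      ((x = u ∧ v ∈ xs ∧ w ∈ xs) ∨ (x = v ∧ u ∈ xs ∧ w ∈ xs) ∨ (x = w ∧ u ∈ xs ∧ v ∈ xs)) := by
  constructor
  · rintro ⟨⟨p1, p2⟩, hmem, heq⟩
    obtain ⟨hp1, hp2⟩ := List.pair_mem_product.mp hmem
    have hx : x ∈ ({u, v, w} : Finset V) := by rw [← heq]; simp
    have hu : u ∈ ({x, p1, p2} : Finset V) := by rw [heq]; simp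
    have hv : v ∈ ({x, p1, p2} : Finset V) := by rw [heq]; simp
    have hw : w ∈ ({x, p1, p2} : Finset V) := by rw [heq]; simp
    simp only [Finset.mem_insert, Finset.mem_singleton] at hx hu hv hw
    rcases hx with rfl | rfl | rfl
    · refine Or.inl ⟨rfl, ?_, ?_⟩
      · rcases hv with h' | h' | h'
        · exact absurd h'.symm huv
        · exact h' ▸ hp1
        · exact h' ▸ hp2
      · rcases hw with h' | h' | h'
        · exact absurd h'.symm huw
        · exact h' ▸ hp1
        · exact h' ▸ hp2
    · refine Or.inr (Or.inl ⟨rfl, ?_, ?_⟩)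
      · rcases hu with h' | h' | h'
        · exact absurd h' huv
        · exact h' ▸ hp1
        · exact h' ▸ hp2
      · rcases hw with h' | h' | h'
        · exact absurd h'.symm hvw
        · exact h' ▸ hp1
        · exact h' ▸ hp2
    · refine Or.inr (Or.inr ⟨rfl, ?_, ?_⟩)
      · rcases hu with h' | h' | h'
        · exact absurd h' huw
        · exact h' ▸ hp1
        · exact h' ▸ hp2
      · rcases hv with h' | h' | h'
        · exact absurd h' hvw
        · exact h' ▸ hp1
        · exact h' ▸ hp2
  · rintro (⟨rfl, h1, h2⟩ | ⟨rfl, h1, h2⟩ | ⟨rfl, h1, h2⟩)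
    · exact ⟨(v, w), List.pair_mem_product.mpr ⟨h1, h2⟩, rfl⟩
    · exact ⟨(u, w), List.pair_mem_product.mpr ⟨h1, h2⟩, by
        ext z; simp; tauto⟩
    · exact ⟨(u, v), List.pair_mem_product.mpr ⟨h1, h2⟩, by
        ext z; simp; tauto⟩

theorem regroup9 {r1 r2 r3 a1 a2 a3 b1 b2 b3 : Prop} :
    ((r1 ∨ r2 ∨ r3) ∨ (a1 ∨ a2 ∨ a3) ∨ (b1 ∨ b2 ∨ b3)) ↔
      ((r1 ∨ a1 ∨ b1) ∨ (r2 ∨ a2 ∨ b2) ∨ (r3 ∨ a3 ∨ b3)) := by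
  tauto

theorem mem_pivotTriples (h : V → V → Bool) {u v w : V} (huv : u ≠ v) (huw : u ≠ w)
    (hvw : v ≠ w) :
    ∀ l : List V, (({u, v, w} : Finset V) ∈ pivotTriples h l ↔
      (pt h u v w l = true ∨ pt h v u w l = true ∨ pt h w u v l = true)) := by
  refine qsortRec h _ (by rw [pivotTriples]; simp [pt]) ?_
  intro x xs ih1 ih2
  rw [pivotTriples_cons, triple_root_iff huv huw hvw, ih1, ih2,
    pt_cons, pt_cons, pt_cons]
  exact regroup9

section RankHelpers

variable (h : V → V → Bool) (x : V) (xs : List V)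

theorem idx_left {a : V} (ha : a ∈ xs.filter (fun y => h y x)) :
    (qsort h (x :: xs)).idxOf a
      = (qsort h (xs.filter (fun y => h y x))).idxOf a ∧
    (qsort h (x :: xs)).idxOf a < (qsort h (xs.filter (fun y => h y x))).length := by
  rw [qsort_cons]
  have : a ∈ qsort h (xs.filter (fun y => h y x)) := mem_qsort h |>.mpr ha
  rw [List.idxOf_append_of_mem this]
  exact ⟨rfl, List.idxOf_lt_length_iff.mpr this⟩

theorem idx_pivot (hx : x ∉ xs) :
    (qsort h (x :: xs)).idxOf x = (qsort h (xs.filter (fun y => h y x))).length := by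
  rw [qsort_cons]
  have hnx : x ∉ qsort h (xs.filter (fun y => h y x)) := by
    rw [mem_qsort]; intro hc; exact hx (List.mem_of_mem_filter hc)
  rw [List.idxOf_append_of_notMem hnx, List.idxOf_cons_self, Nat.add_zero]

theorem idx_right {a : V} (hax : a ≠ x) (ha : a ∈ xs.filter (fun y => !(h y x))) :
    (qsort h (x :: xs)).idxOf a
      = (qsort h (xs.filter (fun y => h y x))).length + 1
        + (qsort h (xs.filter (fun y => !(h y x)))).idxOf a := by
  rw [qsort_cons]
  have hnx : a ∉ qsort h (xs.filter (fun y => h y x)) := by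
    rw [mem_qsort, List.mem_filter]
    rintro ⟨-, hc⟩
    have := (List.mem_filter.mp ha).2
    simp only [Bool.not_eq_true'] at this
    rw [this] at hc; exact Bool.false_ne_true hc
  rw [List.idxOf_append_of_notMem hnx, List.idxOf_cons_ne _ (Ne.symm hax)]
  omega
end RankHelpers

theorem core [Fintype V] (h : V → V → Bool)
    (htour : ∀ a b : V, a ≠ b → h a b = !h b a) (X : V → V → ℝ) :
    ∀ l : List V, l.Nodup → ∀ u v : V, u ≠ v → u ∈ l → v ∈ l →
      rankBefore (qsort h l) u v * X v u + rankBefore (qsort h l) v u * X u v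
        = (if ({u, v} : Finset V) ∈ directPairs h l then 1 else 0) *
            (hr h u v * X v u + hr h v u * X u v)
          + ∑ w ∈ Finset.univ.filter (fun w : V => w ≠ u ∧ w ≠ v),
              (if pt h w u v l = true then 1 else 0) *
                (hr h u w * hr h w v * X v u + hr h v w * hr h w u * X u v) := by
  refine qsortRec h _ ?_ ?_
  · rintro - u v - hu -
    simp at hu
  intro x xs ih1 ih2 hnd u v huv hu hv
  have hxxs : x ∉ xs := (List.nodup_cons.mp hnd).1
  have hxs : xs.Nodup := (List.nodup_cons.mp hnd).2
  by_cases hux : u = x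
  · -- pivot is u
    subst hux
    have hvxs : v ∈ xs := by
      rcases List.mem_cons.mp hv with h' | h'
      · exact absurd h'.symm huv
      · exact h'
    have hdir : ({u, v} : Finset V) ∈ directPairs h (u :: xs) :=
      (directPairs_cons h u xs _).mpr (Or.inl ⟨v, hvxs, rfl⟩)
    have hsum0 : ∀ w ∈ Finset.univ.filter (fun w : V => w ≠ u ∧ w ≠ v),
        (if pt h w u v (u :: xs) = true then (1:ℝ) else 0) *
          (hr h u w * hr h w v * X v u + hr h v w * hr h w u * X u v) = 0 := by
      intro w hw
      obtain ⟨hwu, hwv⟩ := Finset.mem_filter.mp hw |>.2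
      have hptf : ¬ pt h w u v (u :: xs) = true := by
        rw [pt_cons]
        rintro (⟨h1, -⟩ | hp | hp)
        · exact hwu h1.symm
        · exact hxxs (List.mem_of_mem_filter (pt_mem h _ _ _ _ hp).2.1)
        · exact hxxs (List.mem_of_mem_filter (pt_mem h _ _ _ _ hp).2.1)
      rw [if_neg hptf, zero_mul]
    rw [Finset.sum_eq_zero hsum0, if_pos hdir]
    by_cases hvu : h v u = true
    · have hvL : v ∈ xs.filter (fun y => h y u) := List.mem_filter.mpr ⟨hvxs, hvu⟩
      obtain ⟨hidxv, hlt⟩ := idx_left h u xs hvL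
      have hidxu := idx_pivot h u xs hxxs
      have huvb : h u v = false := by rw [htour u v huv, hvu]; rfl
      rw [hidxv] at hlt
      simp only [rankBefore, hr, hidxv, hidxu, huvb, hvu,
        if_neg (not_lt.mpr hlt.le), if_pos hlt]
      norm_num
    · have hvub : h v u = false := by simpa using hvu
      have hvR : v ∈ xs.filter (fun y => !(h y u)) :=
        List.mem_filter.mpr ⟨hvxs, by rw [hvub]; rfl⟩
      have hidxv := idx_right h u xs (fun e => huv e.symm) hvR
      have hidxu := idx_pivot h u xs hxxs
      have huvb : h u v = true := by rw [htour u v huv, hvub]; rfl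
      have hlt : (qsort h (u :: xs)).idxOf u < (qsort h (u :: xs)).idxOf v := by
        rw [hidxv, hidxu]; omega
      simp only [rankBefore, hr, huvb, hvub, if_pos hlt, if_neg (not_lt.mpr hlt.le)]
      norm_num
  · by_cases hvx : v = x
    · -- pivot is v
      subst hvx
      have huxs : u ∈ xs := by
        rcases List.mem_cons.mp hu with h' | h'
        · exact absurd h' huv
        · exact h'
      have hdir : ({u, v} : Finset V) ∈ directPairs h (v :: xs) :=
        (directPairs_cons h v xs _).mpr (Or.inl ⟨u, huxs, Finset.pair_comm v u⟩)
      have hsum0 : ∀ w ∈ Finset.univ.filter (fun w : V => w ≠ u ∧ w ≠ v),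
          (if pt h w u v (v :: xs) = true then (1:ℝ) else 0) *
            (hr h u w * hr h w v * X v u + hr h v w * hr h w u * X u v) = 0 := by
        intro w hw
        obtain ⟨hwu, hwv⟩ := Finset.mem_filter.mp hw |>.2
        have hptf : ¬ pt h w u v (v :: xs) = true := by
          rw [pt_cons]
          rintro (⟨h1, -⟩ | hp | hp)
          · exact hwv h1.symm
          · exact hxxs (List.mem_of_mem_filter (pt_mem h _ _ _ _ hp).2.2)
          · exact hxxs (List.mem_of_mem_filter (pt_mem h _ _ _ _ hp).2.2)
        rw [if_neg hptf, zero_mul]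
      rw [Finset.sum_eq_zero hsum0, if_pos hdir]
      by_cases huvb : h u v = true
      · have huL : u ∈ xs.filter (fun y => h y v) := List.mem_filter.mpr ⟨huxs, huvb⟩
        obtain ⟨hidxu, hlt⟩ := idx_left h v xs huL
        have hidxv := idx_pivot h v xs hxxs
        have hvub : h v u = false := by rw [htour v u (Ne.symm huv), huvb]; rfl
        rw [hidxu] at hlt
        simp only [rankBefore, hr, hidxv, hidxu, huvb, hvub,
          if_pos hlt, if_neg (not_lt.mpr hlt.le)]
        norm_num
      · have huvb' : h u v = false := by simpa using huvb
        have huR : u ∈ xs.filter (fun y => !(h y v)) :=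
          List.mem_filter.mpr ⟨huxs, by rw [huvb']; rfl⟩
        have hidxu := idx_right h v xs huv huR
        have hidxv := idx_pivot h v xs hxxs
        have hvub : h v u = true := by rw [htour v u (Ne.symm huv), huvb']; rfl
        have hlt : (qsort h (v :: xs)).idxOf v < (qsort h (v :: xs)).idxOf u := by
          rw [hidxv, hidxu]; omega
        simp only [rankBefore, hr, huvb', hvub, if_pos hlt, if_neg (not_lt.mpr hlt.le)]
        norm_num
    · -- pivot is neither u nor v
      have hu' : u ∈ xs := by
        rcases List.mem_cons.mp hu with h' | h'
        · exact absurd h' hux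
        · exact h'
      have hv' : v ∈ xs := by
        rcases List.mem_cons.mp hv with h' | h'
        · exact absurd h' hvx
        · exact h'
      have hxu : x ≠ u := fun e => hux e.symm
      have hxv : x ≠ v := fun e => hvx e.symm
      by_cases hux2 : h u x = true <;> by_cases hvx2 : h v x = true
      · -- both go left
        have huL : u ∈ xs.filter (fun y => h y x) := List.mem_filter.mpr ⟨hu', hux2⟩
        have hvL : v ∈ xs.filter (fun y => h y x) := List.mem_filter.mpr ⟨hv', hvx2⟩
        obtain ⟨eu, -⟩ := idx_left h x xs huL
        obtain ⟨ev, -⟩ := idx_left h x xs hvL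
        have hdirIff : (({u, v} : Finset V) ∈ directPairs h (x :: xs))
            ↔ ({u, v} : Finset V) ∈ directPairs h (xs.filter (fun y => h y x)) := by
          rw [directPairs_cons]
          constructor
          · rintro (⟨y, hy, heq⟩ | hm | hm)
            · exfalso
              have hx : x ∈ ({u, v} : Finset V) := by rw [← heq]; simp
              simp only [Finset.mem_insert, Finset.mem_singleton] at hx
              rcases hx with e | e
              · exact hxu e
              · exact hxv e
            · exact hm
            · exfalso
              have := (List.mem_filter.mp (directPairs_mem h _ hm).1).2
              simp only [Bool.not_eq_true'] at this
              rw [this] at hux2; exact Bool.false_ne_true hux2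
          · exact fun hm => Or.inr (Or.inl hm)
        have hsum : ∀ w ∈ Finset.univ.filter (fun w : V => w ≠ u ∧ w ≠ v),
            (if pt h w u v (x :: xs) = true then (1:ℝ) else 0) *
              (hr h u w * hr h w v * X v u + hr h v w * hr h w u * X u v)
            = (if pt h w u v (xs.filter (fun y => h y x)) = true then (1:ℝ) else 0) *
              (hr h u w * hr h w v * X v u + hr h v w * hr h w u * X u v) := by
          intro w hw
          obtain ⟨hwu, hwv⟩ := Finset.mem_filter.mp hw |>.2
          by_cases hwx : w = x
          · subst hwx
            have h1 : h w v = false := by rw [htour w v (Ne.symm hvx), hvx2]; rfl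
            have h2 : h w u = false := by rw [htour w u (Ne.symm hux), hux2]; rfl
            simp [hr, h1, h2]
          · have hiff : pt h w u v (x :: xs) = pt h w u v (xs.filter (fun y => h y x)) := by
              rw [Bool.eq_iff_iff, pt_cons]
              constructor
              · rintro (⟨h1, -⟩ | hp | hp)
                · exact absurd h1.symm hwx
                · exact hp
                · exfalso
                  have := (List.mem_filter.mp (pt_mem h _ _ _ _ hp).2.1).2
                  simp only [Bool.not_eq_true'] at this
                  rw [this] at hux2; exact Bool.false_ne_true hux2
              · exact fun hp => Or.inr (Or.inl hp)
            rw [hiff]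
        rw [Finset.sum_congr rfl hsum, if_congr hdirIff rfl rfl]
        have hrk1 : rankBefore (qsort h (x :: xs)) u v
            = rankBefore (qsort h (xs.filter (fun y => h y x))) u v := by
          simp only [rankBefore, eu, ev]
        have hrk2 : rankBefore (qsort h (x :: xs)) v u
            = rankBefore (qsort h (xs.filter (fun y => h y x))) v u := by
          simp only [rankBefore, eu, ev]
        rw [hrk1, hrk2]
        exact ih1 (hxs.filter _) u v huv huL hvL
      · -- u left, v right
        have hvx2' : h v x = false := by simpa using hvx2
        have huL : u ∈ xs.filter (fun y => h y x) := List.mem_filter.mpr ⟨hu', hux2⟩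
        have hvR : v ∈ xs.filter (fun y => !(h y x)) :=
          List.mem_filter.mpr ⟨hv', by rw [hvx2']; rfl⟩
        obtain ⟨eu, hltu⟩ := idx_left h x xs huL
        have ev := idx_right h x xs (Ne.symm hxv) hvR
        have hlt : (qsort h (x :: xs)).idxOf u < (qsort h (x :: xs)).idxOf v := by
          rw [ev]; omega
        have hdir : ¬ (({u, v} : Finset V) ∈ directPairs h (x :: xs)) := by
          rw [directPairs_cons]
          rintro (⟨y, hy, heq⟩ | hm | hm)
          · have hx : x ∈ ({u, v} : Finset V) := by rw [← heq]; simp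
            simp only [Finset.mem_insert, Finset.mem_singleton] at hx
            rcases hx with e | e
            · exact hxu e
            · exact hxv e
          · have := (List.mem_filter.mp (directPairs_mem h _ hm).2).2
            rw [hvx2'] at this; exact Bool.false_ne_true this
          · have := (List.mem_filter.mp (directPairs_mem h _ hm).1).2
            simp only [Bool.not_eq_true'] at this
            rw [this] at hux2; exact Bool.false_ne_true hux2
        have hxmem : x ∈ Finset.univ.filter (fun w : V => w ≠ u ∧ w ≠ v) := by
          simp [hxu, hxv]
        have hside : ∀ b ∈ Finset.univ.filter (fun w : V => w ≠ u ∧ w ≠ v), b ≠ x →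
            (if pt h b u v (x :: xs) = true then (1:ℝ) else 0) *
              (hr h u b * hr h b v * X v u + hr h v b * hr h b u * X u v) = 0 := by
          intro w hw hwx
          obtain ⟨hwu, hwv⟩ := Finset.mem_filter.mp hw |>.2
          have hptf : ¬ pt h w u v (x :: xs) = true := by
            rw [pt_cons]
            rintro (⟨h1, -⟩ | hp | hp)
            · exact hwx h1.symm
            · have := (List.mem_filter.mp (pt_mem h _ _ _ _ hp).2.2).2
              rw [hvx2'] at this; exact Bool.false_ne_true this
            · have := (List.mem_filter.mp (pt_mem h _ _ _ _ hp).2.1).2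
              simp only [Bool.not_eq_true'] at this
              rw [this] at hux2; exact Bool.false_ne_true hux2
          rw [if_neg hptf, zero_mul]
        rw [Finset.sum_eq_single_of_mem x hxmem hside]
        have hpt : pt h x u v (x :: xs) = true := by
          rw [pt_cons]; exact Or.inl ⟨rfl, hu', hv'⟩
        have h1 : h x v = true := by rw [htour x v hxv, hvx2']; rfl
        have h2 : h x u = false := by rw [htour x u hxu, hux2]; rfl
        simp only [rankBefore, hr, if_pos hlt, if_neg (not_lt.mpr hlt.le),
          if_neg hdir, if_pos hpt, hux2, hvx2', h1, h2]
        norm_num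
      · -- u right, v left
        have hux2' : h u x = false := by simpa using hux2
        have hvL : v ∈ xs.filter (fun y => h y x) := List.mem_filter.mpr ⟨hv', hvx2⟩
        have huR : u ∈ xs.filter (fun y => !(h y x)) :=
          List.mem_filter.mpr ⟨hu', by rw [hux2']; rfl⟩
        obtain ⟨ev, hltv⟩ := idx_left h x xs hvL
        have eu := idx_right h x xs (Ne.symm hxu) huR
        have hlt : (qsort h (x :: xs)).idxOf v < (qsort h (x :: xs)).idxOf u := by
          rw [eu]; omega
        have hdir : ¬ (({u, v} : Finset V) ∈ directPairs h (x :: xs)) := by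
          rw [directPairs_cons]
          rintro (⟨y, hy, heq⟩ | hm | hm)
          · have hx : x ∈ ({u, v} : Finset V) := by rw [← heq]; simp
            simp only [Finset.mem_insert, Finset.mem_singleton] at hx
            rcases hx with e | e
            · exact hxu e
            · exact hxv e
          · have := (List.mem_filter.mp (directPairs_mem h _ hm).1).2
            rw [hux2'] at this; exact Bool.false_ne_true this
          · have := (List.mem_filter.mp (directPairs_mem h _ hm).2).2
            simp only [Bool.not_eq_true'] at this
            rw [this] at hvx2; exact Bool.false_ne_true hvx2
        have hxmem : x ∈ Finset.univ.filter (fun w : V => w ≠ u ∧ w ≠ v) := by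
          simp [hxu, hxv]
        have hside : ∀ b ∈ Finset.univ.filter (fun w : V => w ≠ u ∧ w ≠ v), b ≠ x →
            (if pt h b u v (x :: xs) = true then (1:ℝ) else 0) *
              (hr h u b * hr h b v * X v u + hr h v b * hr h b u * X u v) = 0 := by
          intro w hw hwx
          obtain ⟨hwu, hwv⟩ := Finset.mem_filter.mp hw |>.2
          have hptf : ¬ pt h w u v (x :: xs) = true := by
            rw [pt_cons]
            rintro (⟨h1, -⟩ | hp | hp)
            · exact hwx h1.symm
            · have := (List.mem_filter.mp (pt_mem h _ _ _ _ hp).2.1).2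
              rw [hux2'] at this; exact Bool.false_ne_true this
            · have := (List.mem_filter.mp (pt_mem h _ _ _ _ hp).2.2).2
              simp only [Bool.not_eq_true'] at this
              rw [this] at hvx2; exact Bool.false_ne_true hvx2
          rw [if_neg hptf, zero_mul]
        rw [Finset.sum_eq_single_of_mem x hxmem hside]
        have hpt : pt h x u v (x :: xs) = true := by
          rw [pt_cons]; exact Or.inl ⟨rfl, hu', hv'⟩
        have h1 : h x u = true := by rw [htour x u hxu, hux2']; rfl
        have h2 : h x v = false := by rw [htour x v hxv, hvx2]; rfl
        simp only [rankBefore, hr, if_pos hlt, if_neg (not_lt.mpr hlt.le),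
          if_neg hdir, if_pos hpt, hux2', hvx2, h1, h2]
        norm_num
      · -- both go right
        have hux2' : h u x = false := by simpa using hux2
        have hvx2' : h v x = false := by simpa using hvx2
        have huR : u ∈ xs.filter (fun y => !(h y x)) :=
          List.mem_filter.mpr ⟨hu', by rw [hux2']; rfl⟩
        have hvR : v ∈ xs.filter (fun y => !(h y x)) :=
          List.mem_filter.mpr ⟨hv', by rw [hvx2']; rfl⟩
        have eu := idx_right h x xs (Ne.symm hxu) huR
        have ev := idx_right h x xs (Ne.symm hxv) hvR
        have hdirIff : (({u, v} : Finset V) ∈ directPairs h (x :: xs))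
            ↔ ({u, v} : Finset V) ∈ directPairs h (xs.filter (fun y => !(h y x))) := by
          rw [directPairs_cons]
          constructor
          · rintro (⟨y, hy, heq⟩ | hm | hm)
            · exfalso
              have hx : x ∈ ({u, v} : Finset V) := by rw [← heq]; simp
              simp only [Finset.mem_insert, Finset.mem_singleton] at hx
              rcases hx with e | e
              · exact hxu e
              · exact hxv e
            · exfalso
              have := (List.mem_filter.mp (directPairs_mem h _ hm).1).2
              rw [hux2'] at this; exact Bool.false_ne_true this
            · exact hm
          · exact fun hm => Or.inr (Or.inr hm)
        have hsum : ∀ w ∈ Finset.univ.filter (fun w : V => w ≠ u ∧ w ≠ v),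
            (if pt h w u v (x :: xs) = true then (1:ℝ) else 0) *
              (hr h u w * hr h w v * X v u + hr h v w * hr h w u * X u v)
            = (if pt h w u v (xs.filter (fun y => !(h y x))) = true then (1:ℝ) else 0) *
              (hr h u w * hr h w v * X v u + hr h v w * hr h w u * X u v) := by
          intro w hw
          obtain ⟨hwu, hwv⟩ := Finset.mem_filter.mp hw |>.2
          by_cases hwx : w = x
          · subst hwx
            simp [hr, hux2', hvx2']
          · have hiff : pt h w u v (x :: xs) = pt h w u v (xs.filter (fun y => !(h y x))) := by
              rw [Bool.eq_iff_iff, pt_cons]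
              constructor
              · rintro (⟨h1, -⟩ | hp | hp)
                · exact absurd h1.symm hwx
                · exfalso
                  have := (List.mem_filter.mp (pt_mem h _ _ _ _ hp).2.1).2
                  rw [hux2'] at this; exact Bool.false_ne_true this
                · exact hp
              · exact fun hp => Or.inr (Or.inr hp)
            rw [hiff]
        rw [Finset.sum_congr rfl hsum, if_congr hdirIff rfl rfl]
        have hrk1 : rankBefore (qsort h (x :: xs)) u v
            = rankBefore (qsort h (xs.filter (fun y => !(h y x)))) u v := by
          simp only [rankBefore, eu, ev]
          exact if_congr (by omega) rfl rfl
        have hrk2 : rankBefore (qsort h (x :: xs)) v u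
            = rankBefore (qsort h (xs.filter (fun y => !(h y x)))) v u := by
          simp only [rankBefore, eu, ev]
          exact if_congr (by omega) rfl rfl
        rw [hrk1, hrk2]
        exact ih2 (hxs.filter _) u v huv huR hvR

section Assembly
variable [Fintype V]

noncomputable def S (f : List V → ℝ) : ℝ :=
  (((Finset.univ : Finset V).toList.permutations).map f).sum

theorem lsum_add {α : Type*} (L : List α) (f g : α → ℝ) :
    (L.map (fun x => f x + g x)).sum = (L.map f).sum + (L.map g).sum := by
  induction L with
  | nil => simp
  | cons a t ih => simp [ih]; ring

theorem lsum_mul {α : Type*} (L : List α) (f : α → ℝ) (c : ℝ) :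
    (L.map (fun x => f x * c)).sum = (L.map f).sum * c := by
  induction L with
  | nil => simp
  | cons a t ih => simp [ih]; ring

theorem lsum_finsum {α β : Type*} (L : List α) (s : Finset β) (F : β → α → ℝ) :
    (L.map (fun x => ∑ b ∈ s, F b x)).sum = ∑ b ∈ s, (L.map (fun x => F b x)).sum := by
  induction L with
  | nil => simp
  | cons a t ih => simp [ih, Finset.sum_add_distrib]

theorem S_add (f g : List V → ℝ) : S (fun l => f l + g l) = S f + S g := lsum_add _ f g

theorem S_mul (f : List V → ℝ) (c : ℝ) : S (fun l => f l * c) = S f * c := lsum_mul _ f c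

theorem S_finsum {β : Type*} (s : Finset β) (F : β → List V → ℝ) :
    S (fun l => ∑ b ∈ s, F b l) = ∑ b ∈ s, S (F b) := lsum_finsum _ s F

theorem mem_perms {l : List V} (hl : l ∈ ((Finset.univ : Finset V).toList.permutations)) :
    l.Nodup ∧ ∀ a : V, a ∈ l := by
  have hperm := List.mem_permutations.mp hl
  refine ⟨hperm.nodup_iff.mpr (Finset.nodup_toList _), fun a => ?_⟩
  exact hperm.mem_iff.mpr (Finset.mem_toList.mpr (Finset.mem_univ a))

theorem S_congr {f g : List V → ℝ}
    (hfg : ∀ l : List V, l.Nodup → (∀ a : V, a ∈ l) → f l = g l) : S f = S g := by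
  unfold S
  congr 1
  apply List.map_congr_left
  intro l hl
  obtain ⟨h1, h2⟩ := mem_perms hl
  exact hfg l h1 h2

theorem S_ind_swap (h : V → V → Bool) {a b c : V} (hab : a ≠ b) (hac : a ≠ c) (hbc : b ≠ c) :
    S (fun l => if pt h a b c l = true then (1:ℝ) else 0)
      = S (fun l => if pt h b a c l = true then (1:ℝ) else 0) := by
  unfold S
  have hPnd : ((Finset.univ : Finset V).toList.permutations).Nodup :=
    List.nodup_permutations _ (Finset.nodup_toList _)
  rw [← List.sum_toFinset _ hPnd, ← List.sum_toFinset _ hPnd]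
  have hmem : ∀ l ∈ ((Finset.univ : Finset V).toList.permutations).toFinset,
      l.map (Equiv.swap a b) ∈ ((Finset.univ : Finset V).toList.permutations).toFinset := by
    intro l hl
    rw [List.mem_toFinset] at hl ⊢
    obtain ⟨hnd, hall⟩ := mem_perms hl
    rw [List.mem_permutations]
    rw [List.perm_ext_iff_of_nodup (hnd.map (Equiv.swap a b).injective) (Finset.nodup_toList _)]
    intro z
    constructor
    · intro _; exact Finset.mem_toList.mpr (Finset.mem_univ z)
    · intro _; exact mem_map_swap.mpr (hall _)
  have hinv : ∀ l : List V, (l.map (Equiv.swap a b)).map (Equiv.swap a b) = l := by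
    intro l
    rw [List.map_map]
    have : (Equiv.swap a b) ∘ (Equiv.swap a b) = id := by
      funext z; simp [Equiv.swap_apply_self]
    rw [this, List.map_id]
  refine Finset.sum_nbij' (fun l => l.map (Equiv.swap a b)) (fun l => l.map (Equiv.swap a b))
    hmem hmem (fun l _ => hinv l) (fun l _ => hinv l) ?_
  intro l hl
  rw [List.mem_toFinset] at hl
  obtain ⟨hnd, -⟩ := mem_perms hl
  exact if_congr (pt_map_swap h hab hac hbc l hnd) rfl rfl

theorem S_ind_symm (h : V → V → Bool) (a b c : V) :
    S (fun l => if pt h a b c l = true then (1:ℝ) else 0)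
      = S (fun l => if pt h a c b l = true then (1:ℝ) else 0) := by
  apply S_congr
  intro l _ _
  rw [pt_symm h a b c l]

theorem ind_or3 {P1 P2 P3 : Prop} [Decidable P1] [Decidable P2] [Decidable P3]
    (h12 : ¬(P1 ∧ P2)) (h13 : ¬(P1 ∧ P3)) (h23 : ¬(P2 ∧ P3)) :
    (if P1 ∨ P2 ∨ P3 then (1:ℝ) else 0)
      = (if P1 then (1:ℝ) else 0) + (if P2 then (1:ℝ) else 0) + (if P3 then (1:ℝ) else 0) := by
  by_cases h1 : P1 <;> by_cases h2 : P2 <;> by_cases h3 : P3 <;> simp [*] <;> tauto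

end Assembly

theorem S_mem_triples [Fintype V] (h : V → V → Bool) {u v w : V} (huv : u ≠ v) (huw : u ≠ w)
    (hvw : v ≠ w) :
    S (fun l => if ({u, v, w} : Finset V) ∈ pivotTriples h l then (1:ℝ) else 0)
      = S (fun l => if pt h u v w l = true then (1:ℝ) else 0)
        + S (fun l => if pt h v u w l = true then (1:ℝ) else 0)
        + S (fun l => if pt h w u v l = true then (1:ℝ) else 0) := by
  rw [← S_add, ← S_add]
  apply S_congr
  intro l hnd _
  have hx1 : ¬(pt h u v w l = true ∧ pt h v u w l = true) := by
    rintro ⟨h1, h2⟩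
    exact pt_excl h l hnd u v w w huv h1 h2
  have hx2 : ¬(pt h u v w l = true ∧ pt h w u v l = true) := by
    rintro ⟨h1, h2⟩
    rw [pt_symm] at h1
    exact pt_excl h l hnd u w v v huw h1 h2
  have hx3 : ¬(pt h v u w l = true ∧ pt h w u v l = true) := by
    rintro ⟨h1, h2⟩
    rw [pt_symm] at h1
    rw [pt_symm] at h2
    exact pt_excl h l hnd v w u u hvw h1 h2
  rw [if_congr (mem_pivotTriples h huv huw hvw l) rfl rfl, ind_or3 hx1 hx2 hx3]

theorem trichotomy_sum [Fintype V] [LinearOrder V] (G : V → V → V → ℝ) (u v : V)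
    (huv : u < v) :
    ∑ w ∈ Finset.univ.filter (fun w : V => w ≠ u ∧ w ≠ v), G u v w
      = (∑ w ∈ Finset.univ.filter (fun w : V => v < w), G u v w)
        + (∑ w ∈ Finset.univ.filter (fun w : V => u < w ∧ w < v), G u v w)
        + (∑ w ∈ Finset.univ.filter (fun w : V => w < u), G u v w) := by
  rw [Finset.sum_filter, Finset.sum_filter, Finset.sum_filter, Finset.sum_filter,
    ← Finset.sum_add_distrib, ← Finset.sum_add_distrib]
  apply Finset.sum_congr rfl
  intro w _
  rcases lt_trichotomy w u with h1 | h1 | h1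
  · have : ¬ v < w := not_lt.mpr (le_of_lt (h1.trans huv))
    have h2 : w < v := h1.trans huv
    simp [h1, this, ne_of_lt h1, ne_of_lt h2, not_lt.mpr h1.le]
  · subst h1
    simp [lt_irrefl, not_lt.mpr huv.le, huv]
  · rcases lt_trichotomy w v with h2 | h2 | h2
    · simp [h1, h2, not_lt.mpr h1.le, (ne_of_gt h1), (ne_of_lt h2), not_lt.mpr h2.le]
    · subst h2
      simp [lt_irrefl, not_lt.mpr h1.le, (ne_of_gt h1), huv]
    · simp [h2, ne_of_gt h1, ne_of_gt h2, not_lt.mpr h1.le, not_lt.mpr h2.le]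

theorem reindex [Fintype V] [LinearOrder V] (G : V → V → V → ℝ) :
    ∑ p ∈ Finset.univ.filter (fun p : V × V => p.1 < p.2),
        ∑ w ∈ Finset.univ.filter (fun w : V => w ≠ p.1 ∧ w ≠ p.2), G p.1 p.2 w
      = ∑ t ∈ Finset.univ.filter (fun t : V × V × V => t.1 < t.2.1 ∧ t.2.1 < t.2.2),
          (G t.1 t.2.1 t.2.2 + G t.1 t.2.2 t.2.1 + G t.2.1 t.2.2 t.1) := by
  have step1 : ∑ p ∈ Finset.univ.filter (fun p : V × V => p.1 < p.2),
      ∑ w ∈ Finset.univ.filter (fun w : V => w ≠ p.1 ∧ w ≠ p.2), G p.1 p.2 w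
      = ∑ p ∈ Finset.univ.filter (fun p : V × V => p.1 < p.2),
        ((∑ w ∈ Finset.univ.filter (fun w : V => p.2 < w), G p.1 p.2 w)
          + (∑ w ∈ Finset.univ.filter (fun w : V => p.1 < w ∧ w < p.2), G p.1 p.2 w)
          + (∑ w ∈ Finset.univ.filter (fun w : V => w < p.1), G p.1 p.2 w)) := by
    apply Finset.sum_congr rfl
    intro p hp
    exact trichotomy_sum G p.1 p.2 (Finset.mem_filter.mp hp).2
  rw [step1, Finset.sum_add_distrib, Finset.sum_add_distrib,
    Finset.sum_add_distrib, Finset.sum_add_distrib]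
  have e1 : ∑ p ∈ Finset.univ.filter (fun p : V × V => p.1 < p.2),
      ∑ w ∈ Finset.univ.filter (fun w : V => p.2 < w), G p.1 p.2 w
      = ∑ t ∈ Finset.univ.filter (fun t : V × V × V => t.1 < t.2.1 ∧ t.2.1 < t.2.2),
        G t.1 t.2.1 t.2.2 := by
    rw [Finset.sum_sigma']
    refine Finset.sum_nbij' (fun x => (x.1.1, x.1.2, x.2)) (fun t => ⟨(t.1, t.2.1), t.2.2⟩)
      ?_ ?_ (fun a _ => rfl) (fun a _ => rfl) (fun a _ => rfl)
    · rintro ⟨⟨u, v⟩, w⟩ hx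
      simp only [Finset.mem_sigma, Finset.mem_filter, Finset.mem_univ, true_and] at hx ⊢
      exact hx
    · rintro ⟨u, v, w⟩ ht
      simp only [Finset.mem_sigma, Finset.mem_filter, Finset.mem_univ, true_and] at ht ⊢
      exact ht
  have e2 : ∑ p ∈ Finset.univ.filter (fun p : V × V => p.1 < p.2),
      ∑ w ∈ Finset.univ.filter (fun w : V => p.1 < w ∧ w < p.2), G p.1 p.2 w
      = ∑ t ∈ Finset.univ.filter (fun t : V × V × V => t.1 < t.2.1 ∧ t.2.1 < t.2.2),
        G t.1 t.2.2 t.2.1 := by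
    rw [Finset.sum_sigma']
    refine Finset.sum_nbij' (fun x => (x.1.1, x.2, x.1.2)) (fun t => ⟨(t.1, t.2.2), t.2.1⟩)
      ?_ ?_ (fun a _ => rfl) (fun a _ => rfl) (fun a _ => rfl)
    · rintro ⟨⟨u, v⟩, w⟩ hx
      simp only [Finset.mem_sigma, Finset.mem_filter, Finset.mem_univ, true_and] at hx ⊢
      exact ⟨hx.2.1, hx.2.2⟩
    · rintro ⟨u, v, w⟩ ht
      simp only [Finset.mem_sigma, Finset.mem_filter, Finset.mem_univ, true_and] at ht ⊢
      exact ⟨ht.1.trans ht.2, ht.1, ht.2⟩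
  have e3 : ∑ p ∈ Finset.univ.filter (fun p : V × V => p.1 < p.2),
      ∑ w ∈ Finset.univ.filter (fun w : V => w < p.1), G p.1 p.2 w
      = ∑ t ∈ Finset.univ.filter (fun t : V × V × V => t.1 < t.2.1 ∧ t.2.1 < t.2.2),
        G t.2.1 t.2.2 t.1 := by
    rw [Finset.sum_sigma']
    refine Finset.sum_nbij' (fun x => (x.2, x.1.1, x.1.2)) (fun t => ⟨(t.2.1, t.2.2), t.1⟩)
      ?_ ?_ (fun a _ => rfl) (fun a _ => rfl) (fun a _ => rfl)
    · rintro ⟨⟨u, v⟩, w⟩ hx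
      simp only [Finset.mem_sigma, Finset.mem_filter, Finset.mem_univ, true_and] at hx ⊢
      exact ⟨hx.2, hx.1⟩
    · rintro ⟨u, v, w⟩ ht
      simp only [Finset.mem_sigma, Finset.mem_filter, Finset.mem_univ, true_and] at ht ⊢
      exact ⟨ht.2, ht.1⟩
  rw [e1, e2, e3]


/-- QuickSort decomposition, second part: the expected value of
Σ_{u<v} α[Q_s, X]_{uv} decomposes into direct-comparison and pivot terms. -/
theorem quicksort_decomposition_alpha [Fintype V] [LinearOrder V]
    (h : V → V → Bool) (htour : ∀ a b : V, a ≠ b → h a b = !h b a)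
    (X : V → V → ℝ) :
    qsExp (fun l =>
        ∑ p ∈ Finset.univ.filter (fun p : V × V => p.1 < p.2),
          (rankBefore (qsort h l) p.1 p.2 * X p.2 p.1
            + rankBefore (qsort h l) p.2 p.1 * X p.1 p.2))
      = (∑ p ∈ Finset.univ.filter (fun p : V × V => p.1 < p.2),
          pPair h p.1 p.2 * (hr h p.1 p.2 * X p.2 p.1 + hr h p.2 p.1 * X p.1 p.2))
        + ∑ t ∈ Finset.univ.filter
            (fun t : V × V × V => t.1 < t.2.1 ∧ t.2.1 < t.2.2),
          pTriple h t.1 t.2.1 t.2.2 *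
            ((1 / 3 : ℝ) *
              (hr h t.1 t.2.1 * hr h t.2.1 t.2.2 * X t.2.2 t.1
                + hr h t.2.2 t.2.1 * hr h t.2.1 t.1 * X t.1 t.2.2
                + hr h t.2.1 t.1 * hr h t.1 t.2.2 * X t.2.2 t.2.1
                + hr h t.2.2 t.1 * hr h t.1 t.2.1 * X t.2.1 t.2.2
                + hr h t.1 t.2.2 * hr h t.2.2 t.2.1 * X t.2.1 t.1
                + hr h t.2.1 t.2.2 * hr h t.2.2 t.1 * X t.1 t.2.1)) := by
  have key : S (fun l =>
        ∑ p ∈ Finset.univ.filter (fun p : V × V => p.1 < p.2),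
          (rankBefore (qsort h l) p.1 p.2 * X p.2 p.1
            + rankBefore (qsort h l) p.2 p.1 * X p.1 p.2))
      = (∑ p ∈ Finset.univ.filter (fun p : V × V => p.1 < p.2),
          S (fun l => if ({p.1, p.2} : Finset V) ∈ directPairs h l then (1:ℝ) else 0) *
            (hr h p.1 p.2 * X p.2 p.1 + hr h p.2 p.1 * X p.1 p.2))
        + ∑ t ∈ Finset.univ.filter
            (fun t : V × V × V => t.1 < t.2.1 ∧ t.2.1 < t.2.2),
          S (fun l => if ({t.1, t.2.1, t.2.2} : Finset V) ∈ pivotTriples h l then (1:ℝ) else 0) *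
            ((1 / 3 : ℝ) *
              (hr h t.1 t.2.1 * hr h t.2.1 t.2.2 * X t.2.2 t.1
                + hr h t.2.2 t.2.1 * hr h t.2.1 t.1 * X t.1 t.2.2
                + hr h t.2.1 t.1 * hr h t.1 t.2.2 * X t.2.2 t.2.1
                + hr h t.2.2 t.1 * hr h t.1 t.2.1 * X t.2.1 t.2.2
                + hr h t.1 t.2.2 * hr h t.2.2 t.2.1 * X t.2.1 t.1
                + hr h t.2.1 t.2.2 * hr h t.2.2 t.1 * X t.1 t.2.1)) := by
    rw [S_finsum]
    have hpair : ∀ p ∈ Finset.univ.filter (fun p : V × V => p.1 < p.2),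
        S (fun l => rankBefore (qsort h l) p.1 p.2 * X p.2 p.1
            + rankBefore (qsort h l) p.2 p.1 * X p.1 p.2)
        = S (fun l => if ({p.1, p.2} : Finset V) ∈ directPairs h l then (1:ℝ) else 0) *
            (hr h p.1 p.2 * X p.2 p.1 + hr h p.2 p.1 * X p.1 p.2)
          + ∑ w ∈ Finset.univ.filter (fun w : V => w ≠ p.1 ∧ w ≠ p.2),
              S (fun l => if pt h w p.1 p.2 l = true then (1:ℝ) else 0) *
                (hr h p.1 w * hr h w p.2 * X p.2 p.1 + hr h p.2 w * hr h w p.1 * X p.1 p.2) := by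
      intro p hp
      have hne : p.1 ≠ p.2 := ne_of_lt (Finset.mem_filter.mp hp).2
      have e0 : S (fun l => rankBefore (qsort h l) p.1 p.2 * X p.2 p.1
          + rankBefore (qsort h l) p.2 p.1 * X p.1 p.2)
          = S (fun l =>
              (if ({p.1, p.2} : Finset V) ∈ directPairs h l then (1:ℝ) else 0) *
                (hr h p.1 p.2 * X p.2 p.1 + hr h p.2 p.1 * X p.1 p.2)
              + ∑ w ∈ Finset.univ.filter (fun w : V => w ≠ p.1 ∧ w ≠ p.2),
                  (if pt h w p.1 p.2 l = true then (1:ℝ) else 0) *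
                    (hr h p.1 w * hr h w p.2 * X p.2 p.1
                      + hr h p.2 w * hr h w p.1 * X p.1 p.2)) :=
        S_congr (fun l hnd hall => core h htour X l hnd p.1 p.2 hne (hall _) (hall _))
      rw [e0, S_add, S_mul, S_finsum]
      congr 1
      exact Finset.sum_congr rfl (fun w _ => S_mul _ _)
    rw [Finset.sum_congr rfl hpair, Finset.sum_add_distrib]
    congr 1
    rw [reindex (fun u v w =>
      S (fun l => if pt h w u v l = true then (1:ℝ) else 0) *
        (hr h u w * hr h w v * X v u + hr h v w * hr h w u * X u v))]
    apply Finset.sum_congr rfl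
    intro t ht
    obtain ⟨hab, hbc⟩ := (Finset.mem_filter.mp ht).2
    have hab' : t.1 ≠ t.2.1 := ne_of_lt hab
    have hbc' : t.2.1 ≠ t.2.2 := ne_of_lt hbc
    have hac' : t.1 ≠ t.2.2 := ne_of_lt (hab.trans hbc)
    have E1 : S (fun l => if pt h t.2.1 t.1 t.2.2 l = true then (1:ℝ) else 0)
        = S (fun l => if pt h t.1 t.2.1 t.2.2 l = true then (1:ℝ) else 0) :=
      (S_ind_swap h hab' hac' hbc').symm
    have E2 : S (fun l => if pt h t.2.2 t.1 t.2.1 l = true then (1:ℝ) else 0)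
        = S (fun l => if pt h t.1 t.2.1 t.2.2 l = true then (1:ℝ) else 0) := by
      rw [S_ind_symm h t.2.2 t.1 t.2.1,
        S_ind_swap h hbc'.symm hac'.symm hab'.symm,
        S_ind_symm h t.2.1 t.2.2 t.1, E1]
    rw [S_mem_triples h hab' hac' hbc', E1, E2]
    ring
  rw [show qsExp (fun l =>
        ∑ p ∈ Finset.univ.filter (fun p : V × V => p.1 < p.2),
          (rankBefore (qsort h l) p.1 p.2 * X p.2 p.1
            + rankBefore (qsort h l) p.2 p.1 * X p.1 p.2))
      = S (fun l =>
        ∑ p ∈ Finset.univ.filter (fun p : V × V => p.1 < p.2),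
          (rankBefore (qsort h l) p.1 p.2 * X p.2 p.1
            + rankBefore (qsort h l) p.2 p.1 * X p.1 p.2))
          / ((Nat.factorial (Fintype.card V) : ℝ)) from rfl,
    key, add_div, Finset.sum_div, Finset.sum_div]
  congr 1
  · apply Finset.sum_congr rfl
    intro p _
    rw [show pPair h p.1 p.2
        = S (fun l => if ({p.1, p.2} : Finset V) ∈ directPairs h l then (1:ℝ) else 0)
          / ((Nat.factorial (Fintype.card V) : ℝ)) from rfl]
    ring
  · apply Finset.sum_congr rfl
    intro t _
    rw [show pTriple h t.1 t.2.1 t.2.2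
        = S (fun l => if ({t.1, t.2.1, t.2.2} : Finset V) ∈ pivotTriples h l then (1:ℝ) else 0)
          / ((Nat.factorial (Fintype.card V) : ℝ)) from rfl]
    ring
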